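/- Let B = ⊕_{a=1}^d M_{N_a}(ℂ) be a finite quantum space in standard form with state ψ(x) = Σ_a Tr(Q_a x_a) with diagonal entries q_a(i) > 0, let δ > 0 with Tr(Q_a^{-1}) = δ² for all a, and let m = δ² ∈ ℕ. Let A be a unital C*-algebra containing elements v^x_{ija} (for x ∈ Fin m, 1 ≤ a ≤ d, 1 ≤ i,j ≤ N_a) satisfying: (1) v^x_{kla} v^x_{rsb} = δ_{ab} δ_{lr} v^x_{ksa}; (2) Σ_{l=1}^{N_a} q_a(l)^{-1} v^x_{mla} v^y_{lka} = δ_{xy} δ² v^x_{mka}; (3) (v^x_{kla})^* = v^x_{lka}; (4) Σ_{x ∈ Fin m} v^x_{kla} = δ_{kl} δ² q_a(k) · 1; (5) Σ_{a=1}^d Σ_{k=1}^{N_a} v^x_{kka} = 1; for all admissible indices. Define u^x_{ija} := q_a(j)^{-1/2} δ^{-1} v^x_{ija}. Then the rectangular matrix u = (u^x_{ija}) is unitary: Σ_{x ∈ Fin m} (u^x_{ija})^* u^x_{klb} = δ_{ab} δ_{ik} δ_{jl} · 1 for all admissible a, b, i, j, k, l, and Σ_{a=1}^d Σ_{i,j=1}^{N_a}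 u^x_{ija} (u^y_{ija})^* = δ_{xy} · 1 for all x, y ∈ Fin m. -/

import Mathlib

theorem statement_9 {d : ℕ} {N : Fin d → ℕ} (q : ∀ a, Fin (N a) → ℝ)
    (hq : ∀ a i, 0 < q a i) (hstate : ∑ a, ∑ i, q a i = 1)
    (δ : ℝ) (hδ : 0 < δ) (hδform : ∀ a, ∑ i, (q a i)⁻¹ = δ ^ 2)
    (m : ℕ) (hm : (m : ℝ) = δ ^ 2)
    (A : Type*) [NormedRing A] [StarRing A] [CStarRing A] [CompleteSpace A]
    [NormedAlgebra ℂ A] [StarModule ℂ A]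
    -- generators v^x_{ija} of the linking algebra C(G⁺(K_{δ²}, K(B,ψ)))
    (v : Fin m → ∀ a : Fin d, Fin (N a) → Fin (N a) → A)
    (h1a : ∀ (x : Fin m) (a : Fin d) (k l r s : Fin (N a)),
      v x a k l * v x a r s = if l = r then v x a k s else 0)
    (h1b : ∀ (x : Fin m) (a b : Fin d), a ≠ b → ∀ (k l : Fin (N a)) (r s : Fin (N b)),
      v x a k l * v x b r s = 0)
    (h2 : ∀ (x y : Fin m) (a : Fin d) (i k : Fin (N a)),
      ∑ l, (((q a l)⁻¹ : ℝ) : ℂ) • (v x a i l * v y a l k)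
        = if x = y then ((δ ^ 2 : ℝ) : ℂ) • v x a i k else 0)
    (h3 : ∀ (x : Fin m) (a : Fin d) (k l : Fin (N a)), star (v x a k l) = v x a l k)
    (h4 : ∀ (a : Fin d) (k l : Fin (N a)),
      ∑ x, v x a k l = if k = l then ((δ ^ 2 * q a k : ℝ) : ℂ) • 1 else 0)
    (h5 : ∀ x : Fin m, ∑ a, ∑ k, v x a k k = 1)
    -- the rescaled entries u^x_{ija} = q_a(j)^{-1/2} δ^{-1} v^x_{ija}
    (u : Fin m → ∀ a : Fin d, Fin (N a) → Fin (N a) → A)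
    (hu : ∀ x a i j, u x a i j = (((Real.sqrt (q a j))⁻¹ * δ⁻¹ : ℝ) : ℂ) • v x a i j) :
    (∀ (a : Fin d) (i j k l : Fin (N a)),
      ∑ x, star (u x a i j) * u x a k l = if i = k ∧ j = l then 1 else 0) ∧
    (∀ (a b : Fin d), a ≠ b → ∀ (i j : Fin (N a)) (k l : Fin (N b)),
      ∑ x, star (u x a i j) * u x b k l = 0) ∧
    (∀ x y : Fin m,
      ∑ a, ∑ i, ∑ j, u x a i j * star (u y a i j) = if x = y then 1 else 0) := by
  have hδne : δ ≠ 0 := hδ.ne'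
  refine ⟨?_, ?_, ?_⟩
  · intro a i j k l
    by_cases hik : i = k
    · subst hik
      by_cases hjl : j = l
      · subst hjl
        have hqj : (0:ℝ) < q a j := hq a j
        have hsne : Real.sqrt (q a j) ≠ 0 := by positivity
        have hs : Real.sqrt (q a j) * Real.sqrt (q a j) = q a j := Real.mul_self_sqrt hqj.le
        have hc : (((Real.sqrt (q a j))⁻¹ * δ⁻¹) * ((Real.sqrt (q a j))⁻¹ * δ⁻¹)) * (δ ^ 2 * q a j) = 1 := by
          field_simp
          nlinarith [hs]
        have hterm : ∀ x : Fin m, star (u x a i j) * u x a i j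
            = ((((Real.sqrt (q a j))⁻¹ * δ⁻¹) * ((Real.sqrt (q a j))⁻¹ * δ⁻¹) : ℝ) : ℂ)
                • v x a j j := by
          intro x
          simp only [hu]
          rw [star_smul, Complex.star_def, Complex.conj_ofReal, h3,
            smul_mul_assoc, mul_smul_comm, smul_smul, h1a, if_pos rfl]
          norm_cast
        rw [Finset.sum_congr rfl fun x _ => hterm x, ← Finset.smul_sum, h4, if_pos rfl,
          smul_smul, if_pos ⟨rfl, rfl⟩]
        norm_cast
        simp [hc]
      · have hterm : ∀ x : Fin m, star (u x a i j) * u x a i l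
            = ((((Real.sqrt (q a j))⁻¹ * δ⁻¹) * ((Real.sqrt (q a l))⁻¹ * δ⁻¹) : ℝ) : ℂ)
                • v x a j l := by
          intro x
          simp only [hu]
          rw [star_smul, Complex.star_def, Complex.conj_ofReal, h3,
            smul_mul_assoc, mul_smul_comm, smul_smul, h1a, if_pos rfl]
          norm_cast
        rw [Finset.sum_congr rfl fun x _ => hterm x, ← Finset.smul_sum, h4, if_neg hjl,
          smul_zero]
        simp [hjl]
    · have hterm : ∀ x : Fin m, star (u x a i j) * u x a k l = 0 := by
        intro x
        simp only [hu]
        rw [star_smul, Complex.star_def, Complex.conj_ofReal, h3,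
          smul_mul_assoc, mul_smul_comm, h1a, if_neg hik, smul_zero, smul_zero]
      rw [Finset.sum_congr rfl fun x _ => hterm x]
      simp [hik]
  · intro a b hab i j k l
    have hterm : ∀ x : Fin m, star (u x a i j) * u x b k l = 0 := by
      intro x
      simp only [hu]
      rw [star_smul, Complex.star_def, Complex.conj_ofReal, h3,
        smul_mul_assoc, mul_smul_comm, h1b x a b hab, smul_zero, smul_zero]
    simp [hterm]
  · intro x y
    have hterm : ∀ (a : Fin d) (i j : Fin (N a)), u x a i j * star (u y a i j)
        = ((δ⁻¹ * δ⁻¹ : ℝ) : ℂ) • ((((q a j)⁻¹ : ℝ) : ℂ) • (v x a i j * v y a j i)) := by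
      intro a i j
      have hs : Real.sqrt (q a j) * Real.sqrt (q a j) = q a j := Real.mul_self_sqrt (hq a j).le
      have hinv : (Real.sqrt (q a j))⁻¹ * (Real.sqrt (q a j))⁻¹ = (q a j)⁻¹ := by
        rw [← mul_inv, hs]
      have hco : ((Real.sqrt (q a j))⁻¹ * δ⁻¹) * ((Real.sqrt (q a j))⁻¹ * δ⁻¹)
          = (δ⁻¹ * δ⁻¹) * (q a j)⁻¹ := by
        linear_combination (δ⁻¹ * δ⁻¹) * hinv
      simp only [hu]
      rw [star_smul, Complex.star_def, Complex.conj_ofReal, h3,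
        smul_mul_assoc, mul_smul_comm, smul_smul, smul_smul]
      congr 1
      exact_mod_cast hco
    have step : ∀ (a : Fin d) (i : Fin (N a)), ∑ j, u x a i j * star (u y a i j)
        = ((δ⁻¹ * δ⁻¹ : ℝ) : ℂ) • (if x = y then ((δ ^ 2 : ℝ) : ℂ) • v x a i i else 0) := by
      intro a i
      rw [Finset.sum_congr rfl fun j _ => hterm a i j, ← Finset.smul_sum, h2]
    rw [Finset.sum_congr rfl fun a _ => Finset.sum_congr rfl fun i _ => step a i]
    by_cases hxy : x = y
    · subst hxy
      rw [if_pos rfl]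
      have : ∀ (a : Fin d) (i : Fin (N a)),
          ((δ⁻¹ * δ⁻¹ : ℝ) : ℂ) • (if x = x then ((δ ^ 2 : ℝ) : ℂ) • v x a i i else 0)
            = (((δ⁻¹ * δ⁻¹) * δ ^ 2 : ℝ) : ℂ) • v x a i i := by
        intro a i
        rw [if_pos rfl, smul_smul]
        norm_cast
      rw [Finset.sum_congr rfl fun a _ => Finset.sum_congr rfl fun i _ => this a i]
      simp_rw [← Finset.smul_sum]
      rw [h5, show (δ⁻¹ * δ⁻¹) * δ ^ 2 = 1 by field_simp, Complex.ofReal_one, one_smul]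
    · rw [if_neg hxy]
      simp [hxy]
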